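/- Let ω_p^m = √(p² + m²). For real p, q and m > 0, define h_m(p,q) = (p·ω_q^m − q·ω_p^m)/m². Then as m → 0⁺: if p·q < 0 with p > 0 then h_m(p,q) → +∞; if p·q < 0 with p < 0 then h_m(p,q) → −∞; if p·q > 0 then h_m(p,q) → (p/|q| − q/|p|)/2; if p = q = 0 then h_m(p,q) = 0 for all m; if p ≠ 0 and q = 0 then h_m(p,q) → sign(p)·∞. -/

import Mathlib

open Filter

/-- Limits of `h_m(p,q) = (p·ω_q^m − q·ω_p^m)/m²` as `m → 0⁺`,
where `ω_p^m = √(p² + m²)`. -/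
theorem rapidity_argument_mass_zero_limit (p q : ℝ) :
    let ω : ℝ → ℝ → ℝ := fun m r => Real.sqrt (r ^ 2 + m ^ 2)
    let h : ℝ → ℝ := fun m => (p * ω m q - q * ω m p) / m ^ 2
    (p * q < 0 → 0 < p → Tendsto h (nhdsWithin 0 (Set.Ioi 0)) atTop) ∧
    (p * q < 0 → p < 0 → Tendsto h (nhdsWithin 0 (Set.Ioi 0)) atBot) ∧
    (0 < p * q →
      Tendsto h (nhdsWithin 0 (Set.Ioi 0)) (nhds ((p / |q| - q / |p|) / 2))) ∧
    (p = 0 → q = 0 → ∀ m : ℝ, h m = 0) ∧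
    (p ≠ 0 → q = 0 →
      (0 < p → Tendsto h (nhdsWithin 0 (Set.Ioi 0)) atTop) ∧
      (p < 0 → Tendsto h (nhdsWithin 0 (Set.Ioi 0)) atBot)) := by
  intro ω h
  -- continuity of m ↦ ω m r
  have hcont : ∀ r : ℝ, Continuous (fun m : ℝ => ω m r) := by
    intro r
    simp only [ω]
    fun_prop
  have hω0 : ∀ r : ℝ, ω 0 r = |r| := by
    intro r
    simp only [ω]
    rw [show r ^ 2 + (0:ℝ) ^ 2 = r ^ 2 by ring, Real.sqrt_sq_eq_abs]
  -- numerator tendsto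
  have hN : Tendsto (fun m : ℝ => p * ω m q - q * ω m p) (nhdsWithin 0 (Set.Ioi 0))
      (nhds (p * |q| - q * |p|)) := by
    have : Tendsto (fun m : ℝ => p * ω m q - q * ω m p) (nhds 0)
        (nhds (p * ω 0 q - q * ω 0 p)) := by
      exact ((continuous_const.mul (hcont q)).sub (continuous_const.mul (hcont p))).tendsto 0
    rw [hω0, hω0] at this
    exact this.mono_left nhdsWithin_le_nhds
  have hinv : Tendsto (fun m : ℝ => ((m : ℝ) ^ 2)⁻¹) (nhdsWithin 0 (Set.Ioi 0)) atTop := by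
    have h2 : Tendsto (fun m : ℝ => m ^ 2) (nhdsWithin 0 (Set.Ioi 0))
        (nhdsWithin 0 (Set.Ioi 0)) := by
      rw [tendsto_nhdsWithin_iff]
      constructor
      · have : Tendsto (fun m : ℝ => m ^ 2) (nhds 0) (nhds 0) := by
          simpa using (continuous_pow 2).tendsto (0 : ℝ)
        exact this.mono_left nhdsWithin_le_nhds
      · filter_upwards [self_mem_nhdsWithin] with m hm
        exact pow_pos (show (0:ℝ) < m from hm) 2
    exact tendsto_inv_nhdsGT_zero.comp h2
  have heq : h = fun m : ℝ => (p * ω m q - q * ω m p) * ((m : ℝ) ^ 2)⁻¹ := by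
    funext m
    simp [h, div_eq_mul_inv]
  refine ⟨?_, ?_, ?_, ?_, ?_⟩
  · -- p*q < 0, 0 < p
    intro hpq hp
    rw [heq]
    apply Tendsto.pos_mul_atTop (C := p * |q| - q * |p|) _ hN hinv
    have hq : q < 0 := by nlinarith
    rw [abs_of_neg hq, abs_of_pos hp]
    nlinarith
  · -- p*q < 0, p < 0
    intro hpq hp
    rw [heq]
    apply Tendsto.neg_mul_atTop (C := p * |q| - q * |p|) _ hN hinv
    have hq : 0 < q := by nlinarith
    rw [abs_of_pos hq, abs_of_neg hp]
    nlinarith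
  · -- 0 < p * q
    intro hpq
    have hp0 : p ≠ 0 := by rintro rfl; simp at hpq
    have hq0 : q ≠ 0 := by rintro rfl; simp at hpq
    -- denominator
    set D : ℝ → ℝ := fun m => p * ω m q + q * ω m p with hD
    have hDne : ∀ m : ℝ, 0 < m → D m ≠ 0 := by
      intro m hm
      have hsq : ∀ r : ℝ, 0 < ω m r := by
        intro r
        simp only [ω]
        positivity
      rcases lt_or_gt_of_ne hp0 with hp | hp
      · have hq : q < 0 := by nlinarith
        have : D m < 0 := by
          have := hsq p; have := hsq q
          have h1 : p * ω m q < 0 := mul_neg_of_neg_of_pos hp (hsq q)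
          have h2 : q * ω m p < 0 := mul_neg_of_neg_of_pos hq (hsq p)
          simp only [hD]; linarith
        exact this.ne
      · have hq : 0 < q := by nlinarith
        have : 0 < D m := by
          have h1 : 0 < p * ω m q := mul_pos hp (hsq q)
          have h2 : 0 < q * ω m p := mul_pos hq (hsq p)
          simp only [hD]; linarith
        exact this.ne'
    have hkey : ∀ m : ℝ, 0 < m → h m = (p ^ 2 - q ^ 2) / D m := by
      intro m hm
      have hA : ω m q ^ 2 = q ^ 2 + m ^ 2 := Real.sq_sqrt (by positivity)
      have hB : ω m p ^ 2 = p ^ 2 + m ^ 2 := Real.sq_sqrt (by positivity)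
      simp only [h]
      rw [div_eq_div_iff (by positivity) (hDne m hm)]
      simp only [hD]
      linear_combination p ^ 2 * hA - q ^ 2 * hB
    have hDlim : Tendsto D (nhdsWithin 0 (Set.Ioi 0)) (nhds (p * |q| + q * |p|)) := by
      have : Tendsto D (nhds 0) (nhds (p * ω 0 q + q * ω 0 p)) :=
        ((continuous_const.mul (hcont q)).add (continuous_const.mul (hcont p))).tendsto 0
      rw [hω0, hω0] at this
      exact this.mono_left nhdsWithin_le_nhds
    have hDne0 : p * |q| + q * |p| ≠ 0 := by
      rcases lt_or_gt_of_ne hp0 with hp | hp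
      · have hq : q < 0 := by nlinarith
        rw [abs_of_neg hq, abs_of_neg hp]; nlinarith
      · have hq : 0 < q := by nlinarith
        rw [abs_of_pos hq, abs_of_pos hp]; nlinarith
    have hlim : Tendsto (fun m : ℝ => (p ^ 2 - q ^ 2) / D m) (nhdsWithin 0 (Set.Ioi 0))
        (nhds ((p ^ 2 - q ^ 2) / (p * |q| + q * |p|))) :=
      tendsto_const_nhds.div hDlim hDne0
    have hval : (p ^ 2 - q ^ 2) / (p * |q| + q * |p|) = (p / |q| - q / |p|) / 2 := by
      rcases lt_or_gt_of_ne hp0 with hp | hp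
      · have hq : q < 0 := by nlinarith
        have hq0' : -q ≠ 0 := by linarith
        have hp0' : -p ≠ 0 := by linarith
        rw [abs_of_neg hq, abs_of_neg hp, div_sub_div _ _ hq0' hp0', div_div,
          div_eq_div_iff (by nlinarith) (by nlinarith)]
        ring
      · have hq : 0 < q := by nlinarith
        rw [abs_of_pos hq, abs_of_pos hp]
        field_simp
        ring
    rw [← hval]
    apply hlim.congr'
    filter_upwards [self_mem_nhdsWithin] with m hm
    exact (hkey m hm).symm
  · -- p = 0, q = 0
    rintro rfl rfl m
    simp [h]
  · -- p ≠ 0, q = 0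
    rintro hp0 rfl
    have hEq : ∀ᶠ m in nhdsWithin (0:ℝ) (Set.Ioi 0), h m = p * m⁻¹ := by
      filter_upwards [self_mem_nhdsWithin] with m hm
      have hω : ω m 0 = m := by
        simp only [ω]
        rw [show (0:ℝ) ^ 2 + m ^ 2 = m ^ 2 by ring, Real.sqrt_sq hm.le]
      have hm0 : m ≠ 0 := ne_of_gt hm
      simp only [h, hω]
      field_simp
      ring
    have hminv : Tendsto (fun m : ℝ => m⁻¹) (nhdsWithin 0 (Set.Ioi 0)) atTop :=
      tendsto_inv_nhdsGT_zero
    constructor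
    · intro hp
      exact ((hminv.const_mul_atTop hp).congr' (EventuallyEq.symm hEq))
    · intro hp
      exact ((hminv.const_mul_atTop_of_neg hp).congr' (EventuallyEq.symm hEq))
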